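/- arXiv:1112.0118 — 2 statements merged into one kernel-verified Lean document; each statement's English description precedes it below -/
import Mathlib

section
/- For every integer ℓ ≥ 0, one has Φ_ℓ(1) = (−ξ_1)^ℓ. -/
open scoped BigOperators

noncomputable section

attribute [local instance 10] Classical.propDecidable

/-- The `q`-integer `[n] = (1 - q^n)/(1 - q)`. -/
def qint (q : ℝ) (n : ℕ) : ℝ := (1 - q ^ n) / (1 - q)

/-- `I(r,n)`: multi-indices of positive integers of depth `r` and weight `n`. -/
def Ifin (r n : ℕ) : Finset (Fin r → ℕ) :=
  (Fintype.piFinset fun _ : Fin r => Finset.Icc 1 n).filter fun c => (∑ i, c i) = n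

/-- `I₀(r,n)`: admissible multi-indices (first entry at least 2). -/
def I0fin (r n : ℕ) : Finset (Fin r → ℕ) :=
  (Ifin r n).filter fun c => ∀ h : 0 < r, 2 ≤ c ⟨0, h⟩

/-- The `q`-analogue of the multiple zeta value,
`ζ_q(α) = Σ_{m_1 > ... > m_r > 0} Π_j q^{(α_j - 1) m_j}/[m_j]^{α_j}`. -/
def zetaQ (q : ℝ) {r : ℕ} (α : Fin r → ℕ) : ℝ :=
  ∑' m : {m : Fin r → ℕ // (∀ i j : Fin r, i < j → m j < m i) ∧ ∀ i, 0 < m i},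
    ∏ j, q ^ ((α j - 1) * m.1 j) / qint q (m.1 j) ^ α j

/-- `K_{b,n}(M) = Σ_{α ∈ I₀(b,n)} Σ_{m_1 > ... > m_{b-1} > m_b = M} Π_j q^{(α_j-1)m_j}/[m_j]^{α_j}`. -/
def Kfun (q : ℝ) (b n M : ℕ) : ℝ :=
  ∑ α ∈ I0fin b n,
    ∑' m : {m : Fin b → ℕ //
        (∀ i j : Fin b, i < j → m j < m i) ∧
          ∀ h : 0 < b, m ⟨b - 1, Nat.sub_lt h Nat.one_pos⟩ = M},
      ∏ j, q ^ ((α j - 1) * m.1 j) / qint q (m.1 j) ^ α j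

/-- `f_ℓ(N,M) = Σ_{N = k_1 > k_2 > ... > k_ℓ > M} (q^{k_1-M}/[k_1-M]) Π_{j=2}^{ℓ} 1/[k_j-M]`. -/
def fS (q : ℝ) (l N M : ℕ) : ℝ :=
  ∑ k ∈ (Fintype.piFinset fun _ : Fin l => Finset.Ioc M N).filter
      (fun k => (∀ i j : Fin l, i < j → k j < k i) ∧ ∀ h : 0 < l, k ⟨0, h⟩ = N),
    ∏ j : Fin l, (if (j : ℕ) = 0 then q ^ (k j - M) else 1) / qint q (k j - M)

/-- `g_{ℓ,β}(M) = Σ_{M = m_1 ≥ m_2 ≥ ... ≥ m_ℓ ≥ 1} (q^{(β-1)m_1}/[m_1]^β) Π_{j=2}^{ℓ} q^{m_j}/[m_j]`. -/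
def gS (q : ℝ) (l β M : ℕ) : ℝ :=
  ∑ m ∈ (Fintype.piFinset fun _ : Fin l => Finset.Icc 1 M).filter
      (fun m => (∀ i j : Fin l, i ≤ j → m j ≤ m i) ∧ ∀ h : 0 < l, m ⟨0, h⟩ = M),
    ∏ j : Fin l, if (j : ℕ) = 0 then q ^ ((β - 1) * m j) / qint q (m j) ^ β
      else q ^ m j / qint q (m j)

/-- `h_{r,ℓ}(N_1,...,N_r,M) = Σ_{c ∈ I(r,ℓ)} (Π_{j=1}^{r-1} f_{c_j}(N_j,N_{j+1})) f_{c_r}(N_r,M)`. -/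
def hS (q : ℝ) (r l : ℕ) (N : Fin r → ℕ) (M : ℕ) : ℝ :=
  ∑ c ∈ Ifin r l,
    ∏ j : Fin r, fS q (c j) (N j) (if h : (j : ℕ) + 1 < r then N ⟨(j : ℕ) + 1, h⟩ else M)

/-- `p(n_1,...,n_s;m) = (q^{n_1-m}/[n_1-m]) Π_{j=2}^{s} 1/[n_j-m]`, with `p(∅;m) = 1`. -/
def pS (q : ℝ) {s : ℕ} (n : Fin s → ℕ) (m : ℕ) : ℝ :=
  ∏ j : Fin s, (if (j : ℕ) = 0 then q ^ (n j - m) else 1) / qint q (n j - m)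

/-! ### The algebras 𝔡, 𝔡_ξ and 𝔡₁ -/

/-- The alphabet `S = {z_k}_{k ≥ 1} ∪ {ξ_k}_{k ≥ 1}`: `Sum.inl k = z_k`, `Sum.inr k = ξ_k`. -/
abbrev Letter : Type := ℕ+ ⊕ ℕ+

/-- The noncommutative polynomial algebra 𝔡 over ℤ freely generated by `S`. -/
abbrev Dfree : Type := MonoidAlgebra ℤ (FreeMonoid Letter)

/-- The subalgebra 𝔡_ξ generated by the `ξ_k`, realized as a free algebra on `{ξ_k}_{k≥1}`. -/
abbrev DXi : Type := MonoidAlgebra ℤ (FreeMonoid ℕ+)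

/-- The subalgebra 𝔡₁ generated by `z_1` and `ξ_1`, realized as a free algebra on two letters
(`false = z_1`, `true = ξ_1`). -/
abbrev DOne : Type := MonoidAlgebra ℤ (FreeMonoid Bool)

/-- The generator `z_k` of 𝔡. -/
def zL (k : ℕ+) : Dfree := MonoidAlgebra.single (FreeMonoid.of (Sum.inl k)) 1

/-- The generator `ξ_k` of 𝔡. -/
def xiL (k : ℕ+) : Dfree := MonoidAlgebra.single (FreeMonoid.of (Sum.inr k)) 1

/-- The generator `ξ_k` of 𝔡_ξ. -/
def xiX (k : ℕ+) : DXi := MonoidAlgebra.single (FreeMonoid.of k) 1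

/-- The generator `z_1` of 𝔡₁. -/
def zO : DOne := MonoidAlgebra.single (FreeMonoid.of false) 1

/-- The generator `ξ_1` of 𝔡₁. -/
def xiO : DOne := MonoidAlgebra.single (FreeMonoid.of true) 1

/-- `z_k` for a natural number index `k ≥ 1` (junk value `0` for `k = 0`). -/
def zOf (k : ℕ) : Dfree := if h : 0 < k then zL ⟨k, h⟩ else 0

/-- `ξ_k ∈ 𝔡_ξ` for a natural number index `k ≥ 1` (junk value `0` for `k = 0`). -/
def xiOf (k : ℕ) : DXi := if h : 0 < k then xiX ⟨k, h⟩ else 0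

/-- The canonical embedding `𝔡_ξ ↪ 𝔡`. -/
def toD (v : DXi) : Dfree := MonoidAlgebra.ofCoeff (Finsupp.mapDomain (FreeMonoid.map Sum.inr) v.coeff)

/-- The canonical embedding `𝔡₁ ↪ 𝔡` (`false ↦ z_1`, `true ↦ ξ_1`). -/
def toD1 (w : DOne) : Dfree :=
  MonoidAlgebra.ofCoeff (Finsupp.mapDomain (FreeMonoid.map fun b => if b then Sum.inr 1 else Sum.inl 1) w.coeff)

/-- `J_{z_k}(m) = q^{(k-1)m}/[m]^k` and `J_{ξ_k}(m) = q^{km}/[m]^k`. -/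
def Jlet (q : ℝ) : Letter → ℕ → ℝ
  | Sum.inl k, m => q ^ (((k : ℕ) - 1) * m) / qint q m ^ (k : ℕ)
  | Sum.inr k, m => q ^ ((k : ℕ) * m) / qint q m ^ (k : ℕ)

/-- `A_w(M) = Σ_{M > m_1 > ... > m_r > 0} J_{u_1}(m_1) ⋯ J_{u_r}(m_r)` for a word `w = u_1 ⋯ u_r`. -/
def AW (q : ℝ) (w : List Letter) (M : ℕ) : ℝ :=
  ∑ m ∈ (Fintype.piFinset fun _ : Fin w.length => Finset.Ioo 0 M).filter
      (fun m => ∀ i j, i < j → m j < m i),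
    ∏ j, Jlet q (w.get j) (m j)

/-- `A*_w(M) = Σ_{M > m_1 ≥ ... ≥ m_r ≥ 1} J_{u_1}(m_1) ⋯ J_{u_r}(m_r)` for a word `w = u_1 ⋯ u_r`. -/
def AstarW (q : ℝ) (w : List Letter) (M : ℕ) : ℝ :=
  ∑ m ∈ (Fintype.piFinset fun _ : Fin w.length => Finset.Ioo 0 M).filter
      (fun m => ∀ i j, i ≤ j → m j ≤ m i),
    ∏ j, Jlet q (w.get j) (m j)

/-- The ℤ-linear extension `A(M) : 𝔡 → ℝ`. -/
def Amap (q : ℝ) (x : Dfree) (M : ℕ) : ℝ :=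
  Finsupp.sum x.coeff fun w a => (a : ℝ) * AW q (FreeMonoid.toList w) M

/-- The ℤ-linear extension `A*(M) : 𝔡 → ℝ`. -/
def Astarmap (q : ℝ) (x : Dfree) (M : ℕ) : ℝ :=
  Finsupp.sum x.coeff fun w a => (a : ℝ) * AstarW q (FreeMonoid.toList w) M

/-- The map `ρ` on words:  `ρ(1,w) = w`, `ρ(v,1) = v`,
`ρ(ξ_k v, z_ℓ w) = ξ_k ρ(v, z_ℓ w) + z_ℓ ρ(ξ_k v, w) + z_{k+ℓ} ρ(v,w)`, and
`ρ(ξ_k v, ξ_ℓ w) = ξ_k ρ(v, ξ_ℓ w) + ξ_ℓ ρ(ξ_k v, w) + ξ_{k+ℓ} ρ(v,w)`. -/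
def rhoW : List ℕ+ → List Letter → Dfree
  | [], w => MonoidAlgebra.single (FreeMonoid.ofList w) 1
  | k :: v, [] => MonoidAlgebra.single (FreeMonoid.ofList ((k :: v).map Sum.inr)) 1
  | k :: v, Sum.inl l :: w =>
      xiL k * rhoW v (Sum.inl l :: w) + zL l * rhoW (k :: v) w + zL (k + l) * rhoW v w
  | k :: v, Sum.inr l :: w =>
      xiL k * rhoW v (Sum.inr l :: w) + xiL l * rhoW (k :: v) w + xiL (k + l) * rhoW v w
  termination_by v w => v.length + w.length

/-- The ℤ-bilinear map `ρ : 𝔡_ξ × 𝔡 → 𝔡`. -/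
def rho (v : DXi) (x : Dfree) : Dfree :=
  Finsupp.sum v.coeff fun vw a =>
    Finsupp.sum x.coeff fun xw b => (a * b) • rhoW (FreeMonoid.toList vw) (FreeMonoid.toList xw)

/-- `ξ_k ∘ ·` on words: `ξ_k ∘ 1 = 0` and `ξ_k ∘ (ξ_ℓ v) = ξ_{k+ℓ} v`. -/
def circW (k : ℕ+) : List ℕ+ → DXi
  | [] => 0
  | l :: v => MonoidAlgebra.single (FreeMonoid.ofList ((k + l) :: v)) 1

/-- The ℤ-linear map `ξ_k ∘ · : 𝔡_ξ → 𝔡_ξ`. -/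
def circ (k : ℕ+) (x : DXi) : DXi :=
  Finsupp.sum x.coeff fun w a => a • circW k (FreeMonoid.toList w)

/-- The map `d` on words: `d(1) = 1` and `d(ξ_k v) = ξ_k d(v) + ξ_k ∘ d(v)`. -/
def dW : List ℕ+ → DXi
  | [] => 1
  | k :: v => xiX k * dW v + circ k (dW v)

/-- The ℤ-linear map `d : 𝔡_ξ → 𝔡_ξ`. -/
def dmap (v : DXi) : DXi := Finsupp.sum v.coeff fun w a => a • dW (FreeMonoid.toList w)

/-- The maps `φ_s` on words of 𝔡₁: `φ_0 = id`, `φ_s(1) = ξ_1 z_1^{s-1}` for `s ≥ 1`,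
`φ_s(z_1 w) = z_1 φ_s(w) + ξ_1 Σ_{i=1}^{s} z_1^i φ_{s-i}(w)`, and
`φ_s(ξ_1 w) = ξ_1 Σ_{i=0}^{s} z_1^i φ_{s-i}(w)`. -/
def phiW : ℕ → List Bool → DOne
  | s, [] =>
      if s = 0 then 1
      else MonoidAlgebra.single (FreeMonoid.ofList (true :: List.replicate (s - 1) false)) 1
  | s, false :: w =>
      zO * phiW s w +
        ∑ i ∈ Finset.Icc 1 s, xiO * zO ^ i * phiW (s - i) w
  | s, true :: w =>
      ∑ i ∈ Finset.range (s + 1), xiO * zO ^ i * phiW (s - i) w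
  termination_by _ w => w.length

/-- The ℤ-linear maps `φ_s : 𝔡₁ → 𝔡₁`. -/
def phi (s : ℕ) (x : DOne) : DOne := Finsupp.sum x.coeff fun w a => a • phiW s (FreeMonoid.toList w)

/-- `Φ_0 = id` and `Φ_ℓ = Σ_{r=1}^{ℓ} (-1)^r Σ_{c ∈ I(r,ℓ)} φ_{c_1} ⋯ φ_{c_r}` for `ℓ ≥ 1`. -/
def PhiM : ℕ → DOne → DOne
  | 0 => id
  | l + 1 => fun x =>
      ∑ r ∈ Finset.Icc 1 (l + 1),
        (-1 : ℤ) ^ r •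
          ∑ c ∈ Ifin r (l + 1), ((List.ofFn fun j : Fin r => phi (c j)).foldr (· ∘ ·) id) x

/-- `Z_s(w) = Σ_{ℓ=0}^{s} ρ(d(ξ_1^{s-ℓ}), Φ_ℓ(w))`. -/
def Zmap (s : ℕ) (w : DOne) : Dfree :=
  ∑ l ∈ Finset.range (s + 1), rho (dmap (xiX 1 ^ (s - l))) (toD1 (PhiM l w))
-- basic lemmas
lemma Ifin_zero_left (n : ℕ) (hn : n ≠ 0) : Ifin 0 n = ∅ := by
  ext c; simp [Ifin, hn, Ne.symm hn]

lemma Ifin_empty_of_lt (r n : ℕ) (h : n < r) : Ifin r n = ∅ := by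
  ext c
  simp only [Ifin, Finset.mem_filter, Fintype.mem_piFinset, Finset.mem_Icc, Finset.notMem_empty,
    iff_false, not_and]
  intro hc hsum
  have : (r : ℕ) ≤ ∑ i, c i := by
    calc (r : ℕ) = ∑ _i : Fin r, 1 := by simp
    _ ≤ ∑ i, c i := Finset.sum_le_sum fun i _ => (hc i).1
  omega

lemma Ifin_zero_zero : Ifin 0 0 = {(fun i => i.elim0)} := by
  ext c
  simp only [Ifin, Finset.mem_filter, Fintype.mem_piFinset, Finset.mem_singleton]
  constructor
  · intro _; funext i; exact i.elim0
  · intro h; subst h; simp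

lemma phi_single (s : ℕ) (w : FreeMonoid Bool) :
    phi s (MonoidAlgebra.single w 1) = phiW s (FreeMonoid.toList w) := by
  rw [phi, MonoidAlgebra.coeff_single, Finsupp.sum_single_index] <;> simp

def phiL (s : ℕ) : DOne →ₗ[ℤ] DOne :=
  Finsupp.lift DOne ℤ (FreeMonoid Bool) (fun w => phiW s (FreeMonoid.toList w)) ∘ₗ
    (MonoidAlgebra.coeffLinearEquiv ℤ).toLinearMap

lemma phi_eq (s : ℕ) (x : DOne) : phi s x = phiL s x :=
  rfl

lemma Ifin_split {M : Type*} [AddCommMonoid M] (r n : ℕ) (G : (Fin (r+1) → ℕ) → M) :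
    ∑ c ∈ Ifin (r+1) n, G c
      = ∑ s ∈ Finset.Icc 1 n, ∑ c ∈ Ifin r (n - s), G (Fin.cons s c) := by
  rw [Finset.sum_sigma']
  refine Finset.sum_nbij' (i := fun c => (⟨c 0, Fin.tail c⟩ : Σ _s : ℕ, Fin _ → ℕ))
    (j := fun p => Fin.cons p.1 p.2) ?_ ?_ ?_ ?_ ?_
  · intro c hc
    simp only [Ifin, Finset.mem_filter, Fintype.mem_piFinset, Finset.mem_Icc,
      Finset.mem_sigma] at hc ⊢
    obtain ⟨hc1, hc2⟩ := hc
    rw [Fin.sum_univ_succ] at hc2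
    have h0 := hc1 0
    have htail : ∀ i : Fin r, c i.succ ≤ ∑ i : Fin r, c i.succ := fun i =>
      Finset.single_le_sum (f := fun j : Fin r => c j.succ)
        (fun j _ => Nat.zero_le _) (Finset.mem_univ i)
    refine ⟨⟨h0.1, h0.2⟩, fun i => ?_, ?_⟩
    · have h1 := (hc1 i.succ).1
      have h2 := htail i
      show 1 ≤ c i.succ ∧ c i.succ ≤ n - c 0
      omega
    · show (∑ i : Fin r, c i.succ) = n - c 0
      omega
  · rintro ⟨s, c⟩ hp
    simp only [Finset.mem_sigma, Ifin, Finset.mem_filter, Fintype.mem_piFinset,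
      Finset.mem_Icc] at hp ⊢
    have hs := hp.1
    have hc := hp.2.1
    have hsum := hp.2.2
    refine ⟨fun i => ?_, ?_⟩
    · refine Fin.cases ?_ ?_ i
      · simpa using hs
      · intro j
        have := hc j
        simp only [Fin.cons_succ]
        omega
    · rw [Fin.sum_cons, hsum]
      omega
  · intro c _
    exact Fin.cons_self_tail c
  · rintro ⟨s, c⟩ _
    simp [Fin.tail_cons]
  · intro c _
    rw [Fin.cons_self_tail]

def Comp (r : ℕ) (c : Fin r → ℕ) : DOne → DOne :=
  (List.ofFn fun j : Fin r => phi (c j)).foldr (· ∘ ·) id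

lemma Comp_zero (c : Fin 0 → ℕ) : Comp 0 c = id := by
  simp [Comp]

lemma Comp_succ (r : ℕ) (c : Fin (r+1) → ℕ) :
    Comp (r+1) c = phi (c 0) ∘ Comp r (Fin.tail c) := by
  rw [Comp, List.ofFn_succ, List.foldr_cons]
  rfl

lemma Ifin_zero_zero_sum {M : Type*} [AddCommMonoid M] (G : (Fin 0 → ℕ) → M) :
    ∑ c ∈ Ifin 0 0, G c = G (fun i => i.elim0) := by
  rw [Ifin_zero_zero, Finset.sum_singleton]

lemma PhiM_succ (l : ℕ) (x : DOne) :
    PhiM (l + 1) x = -∑ s ∈ Finset.Icc 1 (l + 1), phi s (PhiM (l + 1 - s) x) := by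
  have key : ∀ s ∈ Finset.Icc 1 (l+1),
      (∑ r ∈ Finset.range (l+1), (-1:ℤ) ^ r • ∑ c ∈ Ifin r (l+1-s), Comp r c x)
        = PhiM (l+1-s) x := by
    intro s hs
    simp only [Finset.mem_Icc] at hs
    rcases Nat.eq_or_lt_of_le hs.2 with h | h
    · have h0 : l + 1 - s = 0 := by omega
      rw [h0]
      rw [Finset.sum_eq_single 0]
      · rw [Ifin_zero_zero, Finset.sum_singleton, Comp_zero]
        simp [PhiM]
      · intro r _ hr
        rw [Ifin_empty_of_lt r 0 (by omega)]
        simp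
      · simp
    · obtain ⟨m, hm⟩ : ∃ m, l + 1 - s = m + 1 := ⟨l - s, by omega⟩
      rw [hm]
      show (∑ r ∈ Finset.range (l+1), (-1:ℤ) ^ r • ∑ c ∈ Ifin r (m+1), Comp r c x)
        = ∑ r ∈ Finset.Icc 1 (m+1), (-1:ℤ) ^ r • ∑ c ∈ Ifin r (m+1), Comp r c x
      refine (Finset.sum_subset ?_ ?_).symm
      · intro r hr
        simp only [Finset.mem_Icc] at hr
        simp only [Finset.mem_range]
        omega
      · intro r _ hr'
        simp only [Finset.mem_Icc, not_and, not_le] at hr'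
        rcases Nat.eq_zero_or_pos r with h0 | h0
        · subst h0
          rw [Ifin_zero_left _ (Nat.succ_ne_zero m)]
          simp
        · rw [Ifin_empty_of_lt r (m+1) (hr' h0)]
          simp
  calc PhiM (l+1) x
      = ∑ r ∈ Finset.Icc 1 (l+1), (-1:ℤ) ^ r • ∑ c ∈ Ifin r (l+1), Comp r c x := rfl
    _ = ∑ r' ∈ Finset.range (l+1), (-1:ℤ) ^ (r'+1) • ∑ c ∈ Ifin (r'+1) (l+1), Comp (r'+1) c x := by
        rw [show Finset.Icc 1 (l+1) = Finset.Ico 1 (l+2) by rfl, Finset.sum_Ico_eq_sum_range]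
        refine Finset.sum_congr rfl fun i _ => ?_
        rw [add_comm 1 i]
    _ = ∑ r' ∈ Finset.range (l+1), ∑ s ∈ Finset.Icc 1 (l+1), ∑ c ∈ Ifin r' (l+1-s),
          (-1:ℤ) ^ (r'+1) • phi s (Comp r' c x) := by
        refine Finset.sum_congr rfl fun r' _ => ?_
        rw [Ifin_split r' (l+1) (fun c => Comp (r'+1) c x), Finset.smul_sum]
        refine Finset.sum_congr rfl fun s _ => ?_
        rw [Finset.smul_sum]
        refine Finset.sum_congr rfl fun c _ => ?_
        rw [Comp_succ, Fin.cons_zero, Fin.tail_cons]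
        rfl
    _ = ∑ s ∈ Finset.Icc 1 (l+1), ∑ r' ∈ Finset.range (l+1), ∑ c ∈ Ifin r' (l+1-s),
          (-1:ℤ) ^ (r'+1) • phi s (Comp r' c x) := Finset.sum_comm
    _ = -∑ s ∈ Finset.Icc 1 (l+1), phi s (PhiM (l+1-s) x) := by
        rw [← Finset.sum_neg_distrib]
        refine Finset.sum_congr rfl fun s hs => ?_
        rw [← key s hs, phi_eq, map_sum, ← Finset.sum_neg_distrib]
        refine Finset.sum_congr rfl fun r' _ => ?_
        rw [map_zsmul, map_sum, ← neg_smul, Finset.smul_sum]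
        refine Finset.sum_congr rfl fun c _ => ?_
        rw [phi_eq, pow_succ, mul_neg_one]

lemma xiO_pow (m : ℕ) :
    xiO ^ m = MonoidAlgebra.single (FreeMonoid.ofList (List.replicate m true)) 1 := by
  induction m with
  | zero => simp [MonoidAlgebra.one_def]
  | succ m ih =>
      rw [pow_succ', ih, xiO, MonoidAlgebra.single_mul_single, one_mul]
      congr 1

lemma zO_pow (m : ℕ) :
    zO ^ m = MonoidAlgebra.single (FreeMonoid.ofList (List.replicate m false)) 1 := by
  induction m with
  | zero => simp [MonoidAlgebra.one_def]
  | succ m ih =>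
      rw [pow_succ', ih, zO, MonoidAlgebra.single_mul_single, one_mul]
      congr 1

lemma xiO_zO_pow (m : ℕ) :
    xiO * zO ^ m
      = MonoidAlgebra.single (FreeMonoid.ofList (true :: List.replicate m false)) 1 := by
  rw [zO_pow, xiO, MonoidAlgebra.single_mul_single, one_mul]
  congr 1

lemma phiW_zero (w : List Bool) : phiW 0 w = MonoidAlgebra.single (FreeMonoid.ofList w) 1 := by
  induction w with
  | nil => simp [phiW, MonoidAlgebra.one_def]
  | cons b w ih =>
      cases b
      · rw [phiW]
        rw [show Finset.Icc 1 0 = ∅ by rfl, Finset.sum_empty, add_zero, ih, zO,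
          MonoidAlgebra.single_mul_single, one_mul]
        rfl
      · rw [phiW]
        rw [Finset.sum_range_one, pow_zero, mul_one, Nat.sub_zero, ih, xiO,
          MonoidAlgebra.single_mul_single, one_mul]
        rfl

lemma phiW_nil_succ (s : ℕ) : phiW (s+1) [] = xiO * zO ^ s := by
  rw [phiW, if_neg (Nat.succ_ne_zero s), xiO_zO_pow]
  congr 1

def Sfun (n : ℕ) : DOne :=
  ∑ s ∈ Finset.range (n+1), (-1:ℤ)^s • phiW s (List.replicate (n-s) true)

lemma Sfun_zero : Sfun 0 = 1 := by
  simp [Sfun, phiW]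

lemma Sfun_succ (n : ℕ) : Sfun (n+1) = 0 := by
  induction n using Nat.strong_induction_on with
  | _ m IH =>
    have step : ∀ s ∈ Finset.range (m+1),
        (-1:ℤ)^s • phiW s (List.replicate (m+1-s) true)
          = ∑ i ∈ Finset.range (s+1),
              (-1:ℤ)^s • (xiO * zO ^ i * phiW (s-i) (List.replicate (m-s) true)) := by
      intro s hs
      simp only [Finset.mem_range] at hs
      have h1 : m + 1 - s = (m - s) + 1 := by omega
      rw [h1, List.replicate_succ, phiW, Finset.smul_sum]
    calc Sfun (m+1)
        = (∑ s ∈ Finset.range (m+1), (-1:ℤ)^s • phiW s (List.replicate (m+1-s) true))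
            + (-1:ℤ)^(m+1) • phiW (m+1) (List.replicate (m+1-(m+1)) true) := by
          rw [Sfun, Finset.sum_range_succ]
      _ = (∑ s ∈ Finset.range (m+1), ∑ i ∈ Finset.range (s+1),
              (-1:ℤ)^s • (xiO * zO ^ i * phiW (s-i) (List.replicate (m-s) true)))
            + (-1:ℤ)^(m+1) • (xiO * zO ^ m) := by
          rw [Finset.sum_congr rfl step]
          congr 2
          rw [Nat.sub_self, List.replicate_zero, phiW_nil_succ]
      _ = (∑ i ∈ Finset.range (m+1), ∑ s ∈ Finset.Ico i (m+1),
              (-1:ℤ)^s • (xiO * zO ^ i * phiW (s-i) (List.replicate (m-s) true)))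
            + (-1:ℤ)^(m+1) • (xiO * zO ^ m) := by
          congr 1
          have := Finset.sum_Ico_Ico_comm 0 (m+1)
            (fun i s => (-1:ℤ)^s • (xiO * zO ^ i * phiW (s-i) (List.replicate (m-s) true)))
          simp only [Finset.range_eq_Ico] at *
          rw [← this]
      _ = (∑ i ∈ Finset.range (m+1),
              (-1:ℤ)^i • (xiO * zO ^ i * Sfun (m-i)))
            + (-1:ℤ)^(m+1) • (xiO * zO ^ m) := by
          congr 1
          refine Finset.sum_congr rfl fun i hi => ?_
          simp only [Finset.mem_range] at hi
          rw [Finset.sum_Ico_eq_sum_range]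
          have hr : m + 1 - i = (m - i) + 1 := by omega
          rw [hr, Sfun, Finset.mul_sum, Finset.smul_sum]
          refine Finset.sum_congr rfl fun t _ => ?_
          rw [mul_smul_comm, smul_smul, ← pow_add]
          have e1 : i + t - i = t := by omega
          have e2 : m - (i + t) = m - i - t := by omega
          rw [e1, e2]
      _ = (-1:ℤ)^m • (xiO * zO ^ m) + (-1:ℤ)^(m+1) • (xiO * zO ^ m) := by
          congr 1
          rw [Finset.sum_eq_single m]
          · rw [Nat.sub_self, Sfun_zero, mul_one]
          · intro i hi him
            simp only [Finset.mem_range] at hi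
            obtain ⟨k, hk⟩ : ∃ k, m - i = k + 1 := ⟨m - i - 1, by omega⟩
            rw [hk, IH k (by omega), mul_zero, smul_zero]
          · simp
      _ = 0 := by
          rw [pow_succ, mul_neg_one, neg_smul, add_neg_cancel]

lemma neg_xiO_pow (k : ℕ) : (-xiO) ^ k = (-1:ℤ)^k • xiO ^ k := by
  induction k with
  | zero => simp
  | succ k ih =>
      rw [pow_succ, pow_succ, ih, pow_succ, mul_neg_one, neg_smul, mul_neg, ← smul_mul_assoc]

lemma phi_xiO_pow (s k : ℕ) : phi s (xiO ^ k) = phiW s (List.replicate k true) := by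
  rw [xiO_pow, phi_single]
  rfl

theorem Phi_one' (l : ℕ) : PhiM l 1 = (-xiO) ^ l := by
  induction l using Nat.strong_induction_on with
  | _ l IH =>
    match l with
    | 0 => simp [PhiM]
    | m + 1 =>
      have hsign : ∀ s ≤ m+1, ((-1:ℤ))^(m+1-s) = (-1)^(m+1) * (-1)^s := by
        intro s hs
        have h1 : (-1:ℤ)^(m+1) = (-1)^(m+1-s) * (-1)^s := by
          rw [← pow_add, Nat.sub_add_cancel hs]
        have h2 : ((-1:ℤ))^s * (-1)^s = 1 := by
          rw [← pow_add, ← two_mul, pow_mul]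
          norm_num
        rw [h1, mul_assoc, h2, mul_one]
      have hS : ∑ s ∈ Finset.Icc 1 (m+1), (-1:ℤ)^s • phiW s (List.replicate (m+1-s) true)
          = -(xiO ^ (m+1)) := by
        have h0 := Sfun_succ m
        rw [Sfun, Finset.sum_range_succ'] at h0
        have hIcc : ∑ s ∈ Finset.Icc 1 (m+1), (-1:ℤ)^s • phiW s (List.replicate (m+1-s) true)
            = ∑ i ∈ Finset.range (m+1),
                (-1:ℤ)^(i+1) • phiW (i+1) (List.replicate (m+1-(i+1)) true) := by
          rw [show Finset.Icc 1 (m+1) = Finset.Ico 1 (m+2) by rfl, Finset.sum_Ico_eq_sum_range]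
          refine Finset.sum_congr rfl fun i _ => ?_
          rw [add_comm 1 i]
        rw [hIcc]
        have h00 : (-1:ℤ)^0 • phiW 0 (List.replicate (m+1-0) true) = xiO ^ (m+1) := by
          rw [pow_zero, one_smul, Nat.sub_zero, phiW_zero, xiO_pow]
        rw [h00] at h0
        rw [eq_neg_iff_add_eq_zero]
        exact h0
      calc PhiM (m+1) 1
          = -∑ s ∈ Finset.Icc 1 (m+1), phi s (PhiM (m+1-s) 1) := PhiM_succ m 1
        _ = -∑ s ∈ Finset.Icc 1 (m+1),
              ((-1:ℤ)^(m+1) * (-1)^s) • phiW s (List.replicate (m+1-s) true) := by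
            congr 1
            refine Finset.sum_congr rfl fun s hs => ?_
            simp only [Finset.mem_Icc] at hs
            rw [IH (m+1-s) (by omega), neg_xiO_pow, phi_eq, map_zsmul, ← phi_eq, phi_xiO_pow,
              ← hsign s hs.2]
        _ = (-xiO) ^ (m+1) := by
            rw [neg_xiO_pow]
            have : ∀ s ∈ Finset.Icc 1 (m+1),
                ((-1:ℤ)^(m+1) * (-1)^s) • phiW s (List.replicate (m+1-s) true)
                  = (-1:ℤ)^(m+1) • ((-1:ℤ)^s • phiW s (List.replicate (m+1-s) true)) := by
              intro s _
              rw [mul_smul]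
            rw [Finset.sum_congr rfl this, ← Finset.smul_sum, hS, smul_neg, neg_neg]

/-- For every integer `ℓ ≥ 0`, `Φ_ℓ(1) = (-ξ_1)^ℓ`. -/
theorem Phi_one (l : ℕ) : PhiM l 1 = (-xiO) ^ l := Phi_one' l

end
end

section
/- For every integer k ≥ 0 and every w ∈ 𝔡_1, one has Σ_{ℓ=0}^{k} (−1)^ℓ ρ(d(ξ_1^{k−ℓ}), ξ_1^ℓ z_1 w) = Σ_{ℓ=0}^{k} z_{ℓ+1} ρ(d(ξ_1^{k−ℓ}), w). -/
open scoped BigOperators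

noncomputable section

attribute [local instance 10] Classical.propDecidable

/-! ### Auxiliary lemmas for `rho_to_z` -/

section RhoToZAux

open MonoidAlgebra Finset

lemma xiX_mul_single (k : ℕ+) (v : List ℕ+) (c : ℤ) :
    xiX k * MonoidAlgebra.single (FreeMonoid.ofList v) c
      = MonoidAlgebra.single (FreeMonoid.ofList (k :: v)) c := by
  rw [xiX, MonoidAlgebra.single_mul_single, one_mul]; rfl

lemma zL_mul_single (l : ℕ+) (w : List Letter) (b : ℤ) :
    zL l * MonoidAlgebra.single (FreeMonoid.ofList w) b
      = MonoidAlgebra.single (FreeMonoid.ofList (Sum.inl l :: w)) b := by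
  rw [zL, MonoidAlgebra.single_mul_single, one_mul]; rfl

lemma xiL_mul_single (l : ℕ+) (w : List Letter) (b : ℤ) :
    xiL l * MonoidAlgebra.single (FreeMonoid.ofList w) b
      = MonoidAlgebra.single (FreeMonoid.ofList (Sum.inr l :: w)) b := by
  rw [xiL, MonoidAlgebra.single_mul_single, one_mul]; rfl

lemma rho_zero_left (x : Dfree) : rho 0 x = 0 := by unfold rho; exact Finsupp.sum_zero_index

lemma rho_zero_right (v : DXi) : rho v 0 = 0 := by
  unfold rho; simp

lemma rho_add_left (v v' : DXi) (x : Dfree) : rho (v + v') x = rho v x + rho v' x := by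
  unfold rho
  rw [MonoidAlgebra.coeff_add]
  refine Finsupp.sum_add_index' (fun a => ?_) (fun a b₁ b₂ => ?_)
  · simp
  · simp [add_mul, add_smul, Finsupp.sum_add]

lemma rho_add_right (v : DXi) (x y : Dfree) : rho v (x + y) = rho v x + rho v y := by
  unfold rho
  rw [← Finsupp.sum_add]
  refine Finsupp.sum_congr (fun vw _ => ?_)
  rw [MonoidAlgebra.coeff_add]
  refine Finsupp.sum_add_index' (fun a => ?_) (fun a b₁ b₂ => ?_)
  · simp
  · simp [mul_add, add_smul]

lemma rho_single_single (v : List ℕ+) (w : List Letter) (a b : ℤ) :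
    rho (MonoidAlgebra.single (FreeMonoid.ofList v) a)
        (MonoidAlgebra.single (FreeMonoid.ofList w) b) = (a * b) • rhoW v w := by
  unfold rho
  rw [MonoidAlgebra.coeff_single, MonoidAlgebra.coeff_single,
    Finsupp.sum_single_index (by simp), Finsupp.sum_single_index (by simp)]
  rfl

lemma rho_one_left (x : Dfree) : rho 1 x = x := by
  unfold rho
  rw [MonoidAlgebra.one_def, MonoidAlgebra.coeff_single, Finsupp.sum_single_index (by simp)]
  have h : (Finsupp.sum x.coeff fun xw b => ((1 : ℤ) * b) • rhoW (FreeMonoid.toList 1) (FreeMonoid.toList xw))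
      = Finsupp.sum x.coeff fun xw b => MonoidAlgebra.single xw b := by
    refine Finsupp.sum_congr (fun xw _ => ?_)
    show (1 * _) • rhoW [] (FreeMonoid.toList xw) = _
    rw [one_mul, rhoW]
    simp
  rw [h, MonoidAlgebra.sum_coeff_single]

lemma rho_sum_left {ι : Type*} (s : Finset ι) (f : ι → DXi) (x : Dfree) :
    rho (∑ i ∈ s, f i) x = ∑ i ∈ s, rho (f i) x := by
  classical
  induction s using Finset.induction with
  | empty => simp [rho_zero_left]
  | insert _ _ h ih => rw [Finset.sum_insert h, Finset.sum_insert h, rho_add_left, ih]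

lemma rho_xi_z_single (k l : ℕ+) (vl : List ℕ+) (wl : List Letter) (c b : ℤ) :
    rho (xiX k * MonoidAlgebra.single (FreeMonoid.ofList vl) c)
        (zL l * MonoidAlgebra.single (FreeMonoid.ofList wl) b) =
      xiL k * rho (MonoidAlgebra.single (FreeMonoid.ofList vl) c)
          (zL l * MonoidAlgebra.single (FreeMonoid.ofList wl) b)
      + zL l * rho (xiX k * MonoidAlgebra.single (FreeMonoid.ofList vl) c)
          (MonoidAlgebra.single (FreeMonoid.ofList wl) b)
      + zL (k + l) * rho (MonoidAlgebra.single (FreeMonoid.ofList vl) c)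
          (MonoidAlgebra.single (FreeMonoid.ofList wl) b) := by
  rw [xiX_mul_single, zL_mul_single, rho_single_single, rho_single_single,
    rho_single_single, rho_single_single]
  rw [show rhoW (k :: vl) (Sum.inl l :: wl)
      = xiL k * rhoW vl (Sum.inl l :: wl) + zL l * rhoW (k :: vl) wl
        + zL (k + l) * rhoW vl wl from by rw [rhoW]]
  rw [smul_add, smul_add, mul_smul_comm, mul_smul_comm, mul_smul_comm]

lemma rho_xi_xi_single (k l : ℕ+) (vl : List ℕ+) (wl : List Letter) (c b : ℤ) :
    rho (xiX k * MonoidAlgebra.single (FreeMonoid.ofList vl) c)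
        (xiL l * MonoidAlgebra.single (FreeMonoid.ofList wl) b) =
      xiL k * rho (MonoidAlgebra.single (FreeMonoid.ofList vl) c)
          (xiL l * MonoidAlgebra.single (FreeMonoid.ofList wl) b)
      + xiL l * rho (xiX k * MonoidAlgebra.single (FreeMonoid.ofList vl) c)
          (MonoidAlgebra.single (FreeMonoid.ofList wl) b)
      + xiL (k + l) * rho (MonoidAlgebra.single (FreeMonoid.ofList vl) c)
          (MonoidAlgebra.single (FreeMonoid.ofList wl) b) := by
  rw [xiX_mul_single, xiL_mul_single, rho_single_single, rho_single_single,
    rho_single_single, rho_single_single]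
  rw [show rhoW (k :: vl) (Sum.inr l :: wl)
      = xiL k * rhoW vl (Sum.inr l :: wl) + xiL l * rhoW (k :: vl) wl
        + xiL (k + l) * rhoW vl wl from by rw [rhoW]]
  rw [smul_add, smul_add, mul_smul_comm, mul_smul_comm, mul_smul_comm]

lemma rho_xi_z (k l : ℕ+) (v : DXi) (x : Dfree) :
    rho (xiX k * v) (zL l * x) =
      xiL k * rho v (zL l * x) + zL l * rho (xiX k * v) x + zL (k + l) * rho v x := by
  induction v using MonoidAlgebra.induction_linear with
  | zero => simp [rho_zero_left, rho_zero_right]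
  | add f g hf hg =>
    rw [mul_add, rho_add_left, rho_add_left, rho_add_left, rho_add_left, hf, hg]
    simp only [mul_add]
    abel
  | single m c =>
    induction x using MonoidAlgebra.induction_linear with
    | zero => simp [rho_zero_right]
    | add f g hf hg =>
      rw [mul_add, rho_add_right, rho_add_right, rho_add_right, rho_add_right, hf, hg]
      simp only [mul_add]
      abel
    | single m' b => exact rho_xi_z_single k l m.toList m'.toList c b

lemma rho_xi_xi (k l : ℕ+) (v : DXi) (x : Dfree) :
    rho (xiX k * v) (xiL l * x) =
      xiL k * rho v (xiL l * x) + xiL l * rho (xiX k * v) x + xiL (k + l) * rho v x := by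
  induction v using MonoidAlgebra.induction_linear with
  | zero => simp [rho_zero_left, rho_zero_right]
  | add f g hf hg =>
    rw [mul_add, rho_add_left, rho_add_left, rho_add_left, rho_add_left, hf, hg]
    simp only [mul_add]
    abel
  | single m c =>
    induction x using MonoidAlgebra.induction_linear with
    | zero => simp [rho_zero_right]
    | add f g hf hg =>
      rw [mul_add, rho_add_right, rho_add_right, rho_add_right, rho_add_right, hf, hg]
      simp only [mul_add]
      abel
    | single m' b => exact rho_xi_xi_single k l m.toList m'.toList c b
lemma circ_add (k : ℕ+) (x y : DXi) : circ k (x + y) = circ k x + circ k y := by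
  unfold circ; rw [MonoidAlgebra.coeff_add]; exact Finsupp.sum_add_index' (fun _ => by simp) (fun _ b₁ b₂ => add_smul b₁ b₂ _)

lemma circ_zero (k : ℕ+) : circ k 0 = 0 := by unfold circ; exact Finsupp.sum_zero_index

lemma circ_sum {ι : Type*} (k : ℕ+) (s : Finset ι) (f : ι → DXi) :
    circ k (∑ i ∈ s, f i) = ∑ i ∈ s, circ k (f i) := by
  classical
  induction s using Finset.induction with
  | empty => simp [circ_zero]
  | insert _ _ h ih => rw [Finset.sum_insert h, Finset.sum_insert h, circ_add, ih]

lemma circ_one (k : ℕ+) : circ k (1 : DXi) = 0 := by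
  unfold circ
  rw [MonoidAlgebra.one_def, MonoidAlgebra.coeff_single, Finsupp.sum_single_index (by simp)]
  show (1 : ℤ) • circW k [] = 0
  rw [circW, smul_zero]

lemma circ_xiX_mul (k a : ℕ+) (v : DXi) : circ k (xiX a * v) = xiX (k + a) * v := by
  induction v using MonoidAlgebra.induction_linear with
  | zero => simp [circ_zero]
  | add f g hf hg => rw [mul_add, circ_add, hf, hg, mul_add]
  | single m c =>
    rw [show m = FreeMonoid.ofList m.toList from rfl, xiX_mul_single, xiX_mul_single]
    unfold circ
    rw [MonoidAlgebra.coeff_single, Finsupp.sum_single_index (by simp)]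
    show c • circW k (a :: m.toList) = _
    rw [circW]
    simp

def DD : ℕ → DXi
  | 0 => 1
  | n + 1 => xiX 1 * DD n + circ 1 (DD n)

lemma dW_replicate (n : ℕ) : dW (List.replicate n 1) = DD n := by
  induction n with
  | zero => rfl
  | succ n ih =>
    rw [List.replicate_succ, dW, ih]
    rfl

lemma xiX_one_pow (n : ℕ) :
    (xiX 1) ^ n = MonoidAlgebra.single (FreeMonoid.ofList (List.replicate n 1)) 1 := by
  induction n with
  | zero => rw [pow_zero, MonoidAlgebra.one_def]; rfl
  | succ n ih => rw [pow_succ', ih, xiX_mul_single, ← List.replicate_succ]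

lemma dmap_pow (n : ℕ) : dmap (xiX 1 ^ n) = DD n := by
  rw [xiX_one_pow]
  unfold dmap
  rw [MonoidAlgebra.coeff_single, Finsupp.sum_single_index (by simp), one_smul]
  exact dW_replicate n

def xp (a : ℕ) : ℕ+ := ⟨a + 1, a.succ_pos⟩

lemma xp_zero : xp 0 = 1 := rfl

lemma one_add_xp (a : ℕ) : (1 : ℕ+) + xp a = xp (a + 1) := by
  apply PNat.coe_injective
  rw [PNat.add_coe]
  show 1 + (a + 1) = a + 1 + 1
  omega

lemma xp_add_one (a : ℕ) : xp a + 1 = xp (a + 1) := rfl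

lemma DD_decomp (m : ℕ) :
    DD (m + 1) = ∑ a ∈ Finset.range (m + 1), xiX (xp a) * DD (m - a) := by
  induction m with
  | zero =>
    show xiX 1 * DD 0 + circ 1 (DD 0) = _
    rw [show DD 0 = 1 from rfl, circ_one, add_zero, Finset.sum_range_one]
    rfl
  | succ m ih =>
    show xiX 1 * DD (m + 1) + circ 1 (DD (m + 1)) = _
    rw [Finset.sum_range_succ', add_comm (xiX 1 * DD (m + 1))]
    congr 1
    · rw [ih, circ_sum]
      apply Finset.sum_congr rfl
      intro a _
      rw [circ_xiX_mul, one_add_xp, Nat.succ_sub_succ]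
lemma rho_DD_z (m : ℕ) (l : ℕ+) (x : Dfree) :
    rho (DD (m + 1)) (zL l * x) =
      (∑ a ∈ Finset.range (m + 1), xiL (xp a) * rho (DD (m - a)) (zL l * x))
      + zL l * rho (DD (m + 1)) x
      + ∑ a ∈ Finset.range (m + 1), zL (xp a + l) * rho (DD (m - a)) x := by
  have hmid : ∑ a ∈ Finset.range (m + 1), zL l * rho (xiX (xp a) * DD (m - a)) x
      = zL l * rho (DD (m + 1)) x := by
    rw [← Finset.mul_sum, ← rho_sum_left, ← DD_decomp]
  conv_lhs => rw [DD_decomp, rho_sum_left]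
  rw [Finset.sum_congr rfl (fun a _ => rho_xi_z (xp a) l (DD (m - a)) x),
    Finset.sum_add_distrib, Finset.sum_add_distrib, hmid]

lemma rho_DD_xi (m : ℕ) (l : ℕ+) (x : Dfree) :
    rho (DD (m + 1)) (xiL l * x) =
      (∑ a ∈ Finset.range (m + 1), xiL (xp a) * rho (DD (m - a)) (xiL l * x))
      + xiL l * rho (DD (m + 1)) x
      + ∑ a ∈ Finset.range (m + 1), xiL (xp a + l) * rho (DD (m - a)) x := by
  have hmid : ∑ a ∈ Finset.range (m + 1), xiL l * rho (xiX (xp a) * DD (m - a)) x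
      = xiL l * rho (DD (m + 1)) x := by
    rw [← Finset.mul_sum, ← rho_sum_left, ← DD_decomp]
  conv_lhs => rw [DD_decomp, rho_sum_left]
  rw [Finset.sum_congr rfl (fun a _ => rho_xi_xi (xp a) l (DD (m - a)) x),
    Finset.sum_add_distrib, Finset.sum_add_distrib, hmid]

lemma neg_pow_succ_smul (l : ℕ) (y : Dfree) :
    (-1 : ℤ) ^ (l + 1) • y = -((-1 : ℤ) ^ l • y) := by
  rw [pow_succ, mul_smul, neg_one_zsmul, smul_neg]

lemma lemC (k : ℕ) : ∀ u : Dfree,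
    (∑ l ∈ Finset.range (k + 1),
        (-1 : ℤ) ^ l • rho (DD (k - l)) (xiL 1 ^ l * (xiL 1 * u)))
      = ∑ a ∈ Finset.range (k + 1), xiL (xp a) * rho (DD (k - a)) u := by
  induction k with
  | zero =>
    intro u
    show ∑ l ∈ Finset.range 1, (-1 : ℤ) ^ l • rho (DD (0 - l)) (xiL 1 ^ l * (xiL 1 * u))
      = ∑ a ∈ Finset.range 1, xiL (xp a) * rho (DD (0 - a)) u
    rw [Finset.sum_range_one, Finset.sum_range_one, pow_zero, one_smul, pow_zero, one_mul]
    rw [show DD (0 - 0) = 1 from rfl, rho_one_left, rho_one_left, xp_zero]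
  | succ k ih =>
    intro u
    rw [Finset.sum_range_succ']
    have hterm : ∀ l, (-1 : ℤ) ^ (l + 1) • rho (DD (k + 1 - (l + 1)))
          (xiL 1 ^ (l + 1) * (xiL 1 * u))
        = -((-1 : ℤ) ^ l • rho (DD (k - l)) (xiL 1 ^ l * (xiL 1 * (xiL 1 * u)))) := by
      intro l
      rw [Nat.succ_sub_succ, neg_pow_succ_smul, pow_succ (xiL 1) l, mul_assoc]
    rw [Finset.sum_congr rfl (fun l _ => hterm l), Finset.sum_neg_distrib]
    rw [ih (xiL 1 * u)]
    simp only [pow_zero, one_smul, one_mul, Nat.sub_zero]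
    rw [rho_DD_xi k 1 u]
    rw [Finset.sum_range_succ' (fun a => xiL (xp a) * rho (DD (k + 1 - a)) u)]
    have h2 : ∀ a, xiL (xp (a + 1)) * rho (DD (k + 1 - (a + 1))) u
        = xiL (xp a + 1) * rho (DD (k - a)) u := by
      intro a
      rw [Nat.succ_sub_succ, xp_add_one]
    rw [Finset.sum_congr rfl (fun a _ => h2 a), xp_zero, Nat.sub_zero]
    abel
lemma zOf_succ (l : ℕ) : zOf (l + 1) = zL (xp l) := by
  unfold zOf
  rw [dif_pos l.succ_pos]
  rfl

end RhoToZAux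

/-- For every integer `k ≥ 0` and every `w ∈ 𝔡₁`,
`Σ_{ℓ=0}^{k} (-1)^ℓ ρ(d(ξ_1^{k-ℓ}), ξ_1^ℓ z_1 w) = Σ_{ℓ=0}^{k} z_{ℓ+1} ρ(d(ξ_1^{k-ℓ}), w)`. -/
theorem rho_to_z (k : ℕ) (w : DOne) :
    (∑ l ∈ Finset.range (k + 1),
        (-1 : ℤ) ^ l • rho (dmap (xiX 1 ^ (k - l))) (xiL 1 ^ l * zL 1 * toD1 w)) =
      ∑ l ∈ Finset.range (k + 1), zOf (l + 1) * rho (dmap (xiX 1 ^ (k - l))) (toD1 w) := by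
  simp only [dmap_pow, zOf_succ, mul_assoc]
  set x := toD1 w with hx
  cases k with
  | zero =>
    show ∑ l ∈ Finset.range 1, (-1 : ℤ) ^ l • rho (DD (0 - l)) (xiL 1 ^ l * (zL 1 * x))
      = ∑ l ∈ Finset.range 1, zL (xp l) * rho (DD (0 - l)) x
    rw [Finset.sum_range_one, Finset.sum_range_one, pow_zero, one_smul, pow_zero, one_mul]
    rw [show DD (0 - 0) = 1 from rfl, rho_one_left, rho_one_left, xp_zero]
  | succ m =>
    rw [Finset.sum_range_succ']
    have hterm : ∀ l, (-1 : ℤ) ^ (l + 1) • rho (DD (m + 1 - (l + 1)))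
          (xiL 1 ^ (l + 1) * (zL 1 * x))
        = -((-1 : ℤ) ^ l • rho (DD (m - l)) (xiL 1 ^ l * (xiL 1 * (zL 1 * x)))) := by
      intro l
      rw [Nat.succ_sub_succ, neg_pow_succ_smul, pow_succ (xiL 1) l, mul_assoc]
    rw [Finset.sum_congr rfl (fun l _ => hterm l), Finset.sum_neg_distrib,
      lemC m (zL 1 * x)]
    simp only [pow_zero, one_smul, one_mul, Nat.sub_zero]
    rw [rho_DD_z m 1 x]
    rw [Finset.sum_range_succ' (fun l => zL (xp l) * rho (DD (m + 1 - l)) x)]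
    have h2 : ∀ a, zL (xp (a + 1)) * rho (DD (m + 1 - (a + 1))) x
        = zL (xp a + 1) * rho (DD (m - a)) x := by
      intro a
      rw [Nat.succ_sub_succ, xp_add_one]
    rw [Finset.sum_congr rfl (fun a _ => h2 a), xp_zero, Nat.sub_zero]
    abel

end
end
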